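/- Let ⟨a_{i'}, c⟩ > 0, let u' satisfy ⟨a_{i'}, u'⟩ = b_{i'}, and let u'' satisfy ⟨a_{i'}, u''⟩ ≤ b_{i'} and ⟨c, u'' − u'⟩ > 0. Let p = u'' − (⟨c, u'' − u'⟩/‖c‖²)·c, assume p ≠ u', fix any r > 0, set v' = u' + (r/‖p − u'‖)·(p − u'), and let w' = γ_{i'}(v') = v' − ((⟨a_{i'}, v'⟩ − b_{i'})/⟨a_{i'}, c⟩)·c be the objective projection of v' onto the hyperplane H_{i'}. Then ⟨c, w' − u'⟩ > 0, i.e., the objective function value at w' strictly exceeds its value at u'. -/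

import Mathlib

open scoped RealInnerProductSpace

/-- With `Ĥ_{i'}` recessive, `u'` on its bounding hyperplane, `u'' ∈ Ĥ_{i'}` with
`⟪c, u'' − u'⟫ > 0`, `p` the orthogonal projection of `u''` onto the objective
hyperplane through `u'` with `p ≠ u'`, any `r > 0`,
`v' = u' + (r/‖p − u'‖) • (p − u')`, and `w' = γ_{i'}(v')` the objective projection
of `v'` onto `H_{i'}`, one has `⟪c, w' − u'⟫ > 0`. -/
theorem objective_increases_along_face {n : ℕ}
    (a c : EuclideanSpace ℝ (Fin n)) (b : ℝ)
    (ha : a ≠ 0) (hc : c ≠ 0) (hac : 0 < ⟪a, c⟫)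
    (u' u'' : EuclideanSpace ℝ (Fin n))
    (hu' : ⟪a, u'⟫ = b) (hu'' : ⟪a, u''⟫ ≤ b)
    (hlt : 0 < ⟪c, u'' - u'⟫)
    (p : EuclideanSpace ℝ (Fin n))
    (hp : p = u'' - (⟪c, u'' - u'⟫ / ‖c‖ ^ 2) • c)
    (hpne : p ≠ u')
    (r : ℝ) (hr : 0 < r)
    (v' : EuclideanSpace ℝ (Fin n))
    (hv' : v' = u' + (r / ‖p - u'‖) • (p - u'))
    (w' : EuclideanSpace ℝ (Fin n))
    (hw' : w' = v' - ((⟪a, v'⟫ - b) / ⟪a, c⟫) • c) :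
    0 < ⟪c, w' - u'⟫ := by
  have hcs : (‖c‖ : ℝ) ^ 2 ≠ 0 := pow_ne_zero _ (norm_ne_zero_iff.mpr hc)
  have hcpu : ⟪c, p - u'⟫ = 0 := by
    have : p - u' = (u'' - u') - (⟪c, u'' - u'⟫ / ‖c‖ ^ 2) • c := by
      rw [hp]; abel
    rw [this, inner_sub_right, inner_smul_right, real_inner_self_eq_norm_sq]
    field_simp
    ring
  have hapu : ⟪a, p - u'⟫ < 0 := by
    have : p - u' = (u'' - u') - (⟪c, u'' - u'⟫ / ‖c‖ ^ 2) • c := by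
      rw [hp]; abel
    rw [this, inner_sub_right, inner_smul_right, inner_sub_right, hu']
    have h1 : ⟪a, u''⟫ - b ≤ 0 := by linarith
    have h2 : 0 < ⟪c, u'' - u'⟫ / ‖c‖ ^ 2 * ⟪a, c⟫ := by positivity
    linarith
  have hnorm : 0 < ‖p - u'‖ := by
    rw [norm_pos_iff]; exact sub_ne_zero_of_ne hpne
  have hav : ⟪a, v'⟫ - b < 0 := by
    rw [hv', inner_add_right, inner_smul_right, hu']
    have ht : 0 < r / ‖p - u'‖ := by positivity
    nlinarith
  have hcv : ⟪c, v' - u'⟫ = 0 := by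
    have : v' - u' = (r / ‖p - u'‖) • (p - u') := by rw [hv']; abel
    rw [this, inner_smul_right, hcpu, mul_zero]
  have hwkey : w' - u' = (v' - u') - ((⟪a, v'⟫ - b) / ⟪a, c⟫) • c := by
    rw [hw']; abel
  rw [hwkey, inner_sub_right, inner_smul_right, real_inner_self_eq_norm_sq, hcv]
  have hcoef : (⟪a, v'⟫ - b) / ⟪a, c⟫ < 0 := div_neg_of_neg_of_pos hav hac
  have hcpos : (0:ℝ) < ‖c‖ ^ 2 := pow_pos (norm_pos_iff.mpr hc) 2
  have := mul_neg_of_neg_of_pos hcoef hcpos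
  linarith
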